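/- arXiv:1401.3737 — 3 statements merged into one kernel-verified Lean document; each statement's English description precedes it below -/
import Mathlib

section
/- If π lies in the interior of the probability simplex (π_i > 0 for all i), then for every nonzero w ∈ ℝⁿ the expected one-step progress rate satisfies 0 ≤ r(π, w) < 1. -/
open Matrix

/-- The coordinate descent transition map `T_i w = w - (Q_iᵀ w / Q_ii) • e_i`. -/
noncomputable def cdT {n : ℕ} (Q : Matrix (Fin n) (Fin n) ℝ) (i : Fin n)
    (w : Fin n → ℝ) : Fin n → ℝ :=
  w - ((fun j => Q j i) ⬝ᵥ w / Q i i) • (Pi.single i 1 : Fin n → ℝ)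

/-- The quadratic objective `f(w) = (1/2) wᵀ Q w`. -/
noncomputable def cdF {n : ℕ} (Q : Matrix (Fin n) (Fin n) ℝ) (w : Fin n → ℝ) : ℝ :=
  (1/2) * (w ⬝ᵥ Q.mulVec w)


/-- The expected one-step progress rate `r(π, w) = Σ_i π_i f(T_i w) / f(w)`. -/
noncomputable def cdR {n : ℕ} (Q : Matrix (Fin n) (Fin n) ℝ)
    (pi : Fin n → ℝ) (w : Fin n → ℝ) : ℝ :=
  ∑ i, pi i * cdF Q (cdT Q i w) / cdF Q w

lemma col_dot_eq_mulVec {n : ℕ} (Q : Matrix (Fin n) (Fin n) ℝ)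
    (hsym : ∀ i j, Q i j = Q j i) (i : Fin n) (w : Fin n → ℝ) :
    (fun j => Q j i) ⬝ᵥ w = Q.mulVec w i := by
  simp only [Matrix.mulVec, dotProduct]
  exact Finset.sum_congr rfl fun j _ => by rw [hsym i j]

lemma cdF_cdT_eq {n : ℕ} (Q : Matrix (Fin n) (Fin n) ℝ)
    (hsym : ∀ i j, Q i j = Q j i) (i : Fin n) (hQii : Q i i ≠ 0) (w : Fin n → ℝ) :
    cdF Q (cdT Q i w) = cdF Q w - (Q.mulVec w i)^2 / (2 * Q i i) := by
  set d : ℝ := Q.mulVec w i with hd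
  set c : ℝ := d / Q i i with hc
  have hdT : cdT Q i w = w - c • (Pi.single i 1 : Fin n → ℝ) := by
    rw [cdT, col_dot_eq_mulVec Q hsym]
  have hmulsingle : Q.mulVec (Pi.single i 1 : Fin n → ℝ) = fun j => Q j i := by
    funext j
    simp [Matrix.mulVec, dotProduct_single]
  have h1 : (Pi.single i 1 : Fin n → ℝ) ⬝ᵥ Q.mulVec w = d := by
    simp [single_dotProduct, hd]
  have h2 : w ⬝ᵥ Q.mulVec (Pi.single i 1 : Fin n → ℝ) = d := by
    rw [hmulsingle, dotProduct_comm, col_dot_eq_mulVec Q hsym]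
  have h3 : (Pi.single i 1 : Fin n → ℝ) ⬝ᵥ Q.mulVec (Pi.single i 1 : Fin n → ℝ) = Q i i := by
    rw [hmulsingle]
    simp [single_dotProduct]
  rw [cdF, hdT, Matrix.mulVec_sub, Matrix.mulVec_smul, sub_dotProduct, dotProduct_sub,
    dotProduct_sub, smul_dotProduct, smul_dotProduct, dotProduct_smul, dotProduct_smul,
    h1, h2, h3]
  rw [cdF, hc]
  field_simp
  linear_combination (d^2*(Q i i * (Q i i)⁻¹ - 1)) * (mul_inv_cancel₀ hQii)

/-- if `π` lies in the interior of the probability simplex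
(`π_i > 0` for all `i`), then `0 ≤ r(π, w) < 1` for every nonzero `w`. -/
theorem cdR_nonneg_lt_one {n : ℕ} (hn : 1 ≤ n)
    (Q : Matrix (Fin n) (Fin n) ℝ) (hQ : Q.PosDef)
    (pi : Fin n → ℝ) (hpi : ∀ i, 0 < pi i) (hsum : ∑ i, pi i = 1)
    (w : Fin n → ℝ) (hw : w ≠ 0) :
    0 ≤ cdR Q pi w ∧ cdR Q pi w < 1 := by
  have hsym : ∀ i j, Q i j = Q j i := fun i j => by
    have := hQ.1
    rw [Matrix.IsHermitian] at this
    have := congrFun (congrFun this j) i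
    simpa [Matrix.conjTranspose_apply] using this
  have hfw : 0 < cdF Q w := by
    have := hQ.dotProduct_mulVec_pos hw
    simp only [star_trivial] at this
    rw [cdF]; positivity
  have hQii : ∀ i, 0 < Q i i := fun i => by
    have := hQ.dotProduct_mulVec_pos (x := Pi.single i 1) (by
      intro h
      have := congrFun h i
      simp at this)
    simp only [star_trivial] at this
    have h3 : (Pi.single i 1 : Fin n → ℝ) ⬝ᵥ Q.mulVec (Pi.single i 1 : Fin n → ℝ) = Q i i := by
      simp [single_dotProduct, Matrix.mulVec, dotProduct_single]
    rwa [h3] at this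
  have hfT : ∀ i, 0 ≤ cdF Q (cdT Q i w) := fun i => by
    have := hQ.posSemidef.dotProduct_mulVec_nonneg (cdT Q i w)
    simp only [star_trivial, RCLike.zero_re] at this
    rw [cdF]
    -- `this : 0 ≤ cdT Q i w ⬝ᵥ Q.mulVec (cdT Q i w)` over ℝ
    nlinarith [this]
  have hQw : Q.mulVec w ≠ 0 := by
    intro h
    have := hQ.dotProduct_mulVec_pos hw
    simp [h] at this
  obtain ⟨i0, hi0⟩ := Function.ne_iff.mp hQw
  constructor
  · apply Finset.sum_nonneg
    intro i _
    have := hpi i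
    have := hfT i
    positivity
  · rw [cdR]
    calc ∑ i, pi i * cdF Q (cdT Q i w) / cdF Q w < ∑ i, pi i := by
          apply Finset.sum_lt_sum
          · intro i _
            rw [div_le_iff₀ hfw, cdF_cdT_eq Q hsym i (hQii i).ne' w]
            have h1 : 0 ≤ (Q.mulVec w i)^2 / (2 * Q i i) :=
              div_nonneg (sq_nonneg _) (by linarith [hQii i])
            nlinarith [hpi i, hfT i, h1]
          · refine ⟨i0, Finset.mem_univ i0, ?_⟩
            rw [div_lt_iff₀ hfw, cdF_cdT_eq Q hsym i0 (hQii i0).ne' w]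
            have hsq : 0 < (Q.mulVec w i0)^2 :=
              lt_of_le_of_ne (sq_nonneg _) (Ne.symm (pow_ne_zero 2 hi0))
            have h1 : 0 < (Q.mulVec w i0)^2 / (2 * Q i0 i0) :=
              div_pos hsq (by linarith [hQii i0])
            nlinarith [hpi i0, hfw]
      _ = 1 := hsum
end

section
/- (Lemma 2.) If π lies in the interior of the probability simplex (π_i > 0 for all i), then the supremum U_π = sup{ r(π, w) : w ∈ ℝⁿ, w ≠ 0 } is attained and satisfies U_π < 1; that is, there exists a constant U_π < 1 such that r(π, w) ≤ U_π for all nonzero w, and some nonzero w achieves r(π, w) = U_π. -/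
open Matrix

lemma cdF_pos {n : ℕ} {Q : Matrix (Fin n) (Fin n) ℝ} (hQ : Q.PosDef)
    {w : Fin n → ℝ} (hw : w ≠ 0) : 0 < cdF Q w := by
  have h : 0 < w ⬝ᵥ Q.mulVec w := (by simpa using hQ.dotProduct_mulVec_pos hw)
  unfold cdF; linarith

lemma cdF_cdT {n : ℕ} (Q : Matrix (Fin n) (Fin n) ℝ) (hQ : Q.PosDef) (i : Fin n)
    (w : Fin n → ℝ) :
    cdF Q (cdT Q i w) = cdF Q w - (Q.mulVec w i)^2 / (2 * Q i i) := by
  unfold cdF cdT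
  have hsym : ∀ j, Q j i = Q i j := fun j =>
    (congrFun (congrFun hQ.1.symm j) i).trans (by simp [Matrix.conjTranspose_apply])
  have hcol : (fun j => Q j i) ⬝ᵥ w = Q.mulVec w i := by
    simp only [dotProduct, mulVec]
    exact Finset.sum_congr rfl fun j _ => by rw [hsym j]
  have hQii : 0 < Q i i := by
    have h0 : (Pi.single i 1 : Fin n → ℝ) ≠ 0 := by
      intro h; have := congrFun h i; simp at this
    have := (by simpa using hQ.dotProduct_mulVec_pos h0 : 0 < (Pi.single i 1 : Fin n → ℝ) ⬝ᵥ Q.mulVec (Pi.single i 1))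
    simpa [dotProduct, mulVec, Pi.single_apply, Finset.sum_ite_eq'] using this
  rw [hcol]
  rw [Matrix.mulVec_sub, Matrix.mulVec_smul, sub_dotProduct, dotProduct_sub, dotProduct_sub,
    smul_dotProduct, dotProduct_smul, dotProduct_smul, smul_dotProduct]
  have h1 : (Pi.single i 1 : Fin n → ℝ) ⬝ᵥ Q.mulVec w = Q.mulVec w i := by
    simp [dotProduct, Pi.single_apply, Finset.sum_ite_eq']
  have h2 : w ⬝ᵥ Q.mulVec (Pi.single i 1) = Q.mulVec w i := by
    rw [← hcol]; simp [dotProduct, mulVec, Pi.single_apply, mul_comm]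
  have h3 : (Pi.single i 1 : Fin n → ℝ) ⬝ᵥ Q.mulVec (Pi.single i 1) = Q i i := by
    simp [dotProduct, mulVec, Pi.single_apply, Finset.sum_ite_eq']
  rw [h1, h2, h3]
  field_simp
  linear_combination (Q *ᵥ w) i ^ 2 * (Q i i * (Q i i)⁻¹ - 1) * mul_inv_cancel₀ hQii.ne'

lemma cdT_smul {n : ℕ} (Q : Matrix (Fin n) (Fin n) ℝ) (i : Fin n) (c : ℝ)
    (w : Fin n → ℝ) : cdT Q i (c • w) = c • cdT Q i w := by
  unfold cdT
  rw [dotProduct_smul]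
  ext j
  simp [smul_eq_mul]
  ring

lemma cdF_smul {n : ℕ} (Q : Matrix (Fin n) (Fin n) ℝ) (c : ℝ) (w : Fin n → ℝ) :
    cdF Q (c • w) = c^2 * cdF Q w := by
  unfold cdF
  rw [Matrix.mulVec_smul, dotProduct_smul, smul_dotProduct]
  simp [smul_eq_mul]; ring

lemma cdR_smul {n : ℕ} (Q : Matrix (Fin n) (Fin n) ℝ) (pi : Fin n → ℝ) {c : ℝ}
    (hc : c ≠ 0) (w : Fin n → ℝ) : cdR Q pi (c • w) = cdR Q pi w := by
  unfold cdR
  refine Finset.sum_congr rfl fun i _ => ?_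
  rw [cdT_smul, cdF_smul, cdF_smul]
  by_cases hf : cdF Q w = 0
  · simp [hf]
  · field_simp

lemma cdR_lt_one {n : ℕ} {Q : Matrix (Fin n) (Fin n) ℝ} (hQ : Q.PosDef)
    (pi : Fin n → ℝ) (hpi : ∀ i, 0 < pi i) (hsum : ∑ i, pi i = 1)
    {w : Fin n → ℝ} (hw : w ≠ 0) : cdR Q pi w < 1 := by
  have hf := cdF_pos hQ hw
  have hQv : Q.mulVec w ≠ 0 := by
    intro h
    have := (by simpa using hQ.dotProduct_mulVec_pos hw : 0 < w ⬝ᵥ Q.mulVec w)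
    rw [h] at this
    simp [dotProduct] at this
  obtain ⟨i0, hi0⟩ := Function.ne_iff.mp hQv
  have hQii : ∀ i, 0 < Q i i := by
    intro i
    have h0 : (Pi.single i 1 : Fin n → ℝ) ≠ 0 := by
      intro h; have := congrFun h i; simp at this
    have := (by simpa using hQ.dotProduct_mulVec_pos h0 : 0 < (Pi.single i 1 : Fin n → ℝ) ⬝ᵥ Q.mulVec (Pi.single i 1))
    simpa [dotProduct, mulVec, Pi.single_apply, Finset.sum_ite_eq'] using this
  rw [← hsum]
  unfold cdR
  apply Finset.sum_lt_sum
  · intro i _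
    rw [cdF_cdT Q hQ]
    have hg : 0 ≤ (Q.mulVec w i)^2 / (2 * Q i i) :=
      div_nonneg (sq_nonneg _) (by linarith [hQii i])
    calc pi i * (cdF Q w - Q.mulVec w i ^ 2 / (2 * Q i i)) / cdF Q w
        ≤ pi i * cdF Q w / cdF Q w := by
          apply (div_le_div_iff_of_pos_right hf).mpr
          nlinarith [(hpi i).le, hg]
      _ = pi i := by field_simp
  · refine ⟨i0, Finset.mem_univ i0, ?_⟩
    rw [cdF_cdT Q hQ]
    have hg : 0 < (Q.mulVec w i0)^2 / (2 * Q i0 i0) :=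
      div_pos (by simpa [sq_abs] using pow_pos (abs_pos.mpr hi0) 2) (by linarith [hQii i0])
    calc pi i0 * (cdF Q w - Q.mulVec w i0 ^ 2 / (2 * Q i0 i0)) / cdF Q w
        < pi i0 * cdF Q w / cdF Q w := by
          apply (div_lt_div_iff_of_pos_right hf).mpr
          nlinarith [hpi i0, hg]
      _ = pi i0 := by field_simp

lemma cdF_cont {n : ℕ} (Q : Matrix (Fin n) (Fin n) ℝ) : Continuous (cdF Q) := by
  unfold cdF
  apply continuous_const.mul
  unfold dotProduct mulVec dotProduct
  apply continuous_finset_sum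
  intro i _
  exact (continuous_apply i).mul
    (continuous_finset_sum _ fun j _ => continuous_const.mul (continuous_apply j))

lemma cdT_cont {n : ℕ} (Q : Matrix (Fin n) (Fin n) ℝ) (i : Fin n) :
    Continuous (cdT Q i) := by
  unfold cdT
  apply continuous_id.sub
  refine Continuous.smul (f := fun w => (fun j => Q j i) ⬝ᵥ w / Q i i) (g := fun _ => (Pi.single i 1 : Fin n → ℝ)) ?_ continuous_const
  apply Continuous.div_const
  unfold dotProduct
  exact continuous_finset_sum _ fun j _ => continuous_const.mul (continuous_apply j)

/-- Lemma 2: if `π` lies in the interior of the probability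
simplex, then the supremum `U_π = sup { r(π, w) : w ≠ 0 }` is attained and
satisfies `U_π < 1`: there is a constant `U_π < 1` with `r(π, w) ≤ U_π` for all
nonzero `w`, and some nonzero `w` achieves `r(π, w) = U_π`. -/
theorem cdR_sup_attained_lt_one {n : ℕ} (hn : 1 ≤ n)
    (Q : Matrix (Fin n) (Fin n) ℝ) (hQ : Q.PosDef)
    (pi : Fin n → ℝ) (hpi : ∀ i, 0 < pi i) (hsum : ∑ i, pi i = 1) :
    ∃ U : ℝ, U < 1 ∧ (∀ w : Fin n → ℝ, w ≠ 0 → cdR Q pi w ≤ U) ∧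
      (∃ w : Fin n → ℝ, w ≠ 0 ∧ cdR Q pi w = U) := by
  haveI : Nonempty (Fin n) := ⟨⟨0, hn⟩⟩
  have hcont : ContinuousOn (cdR Q pi) {w : Fin n → ℝ | w ≠ 0} := by
    unfold cdR
    apply continuousOn_finset_sum
    intro i _
    exact ((continuous_const.mul ((cdF_cont Q).comp (cdT_cont Q i))).continuousOn).div
      (cdF_cont Q).continuousOn (fun w hw => ne_of_gt (cdF_pos hQ hw))
  have hsub : Metric.sphere (0 : Fin n → ℝ) 1 ⊆ {w : Fin n → ℝ | w ≠ 0} := by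
    intro w hw
    simp only [Metric.mem_sphere, dist_zero_right] at hw
    intro h
    rw [h] at hw; simp at hw
  have hne : (Metric.sphere (0 : Fin n → ℝ) 1).Nonempty :=
    NormedSpace.sphere_nonempty.mpr zero_le_one
  obtain ⟨w0, hw0mem, hmax⟩ :=
    (isCompact_sphere (0 : Fin n → ℝ) 1).exists_isMaxOn hne (hcont.mono hsub)
  have hw0 : w0 ≠ 0 := hsub hw0mem
  refine ⟨cdR Q pi w0, cdR_lt_one hQ pi hpi hsum hw0, ?_, w0, hw0, rfl⟩
  intro w hw
  have hnw : ‖w‖ ≠ 0 := norm_ne_zero_iff.mpr hw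
  have hmem : ‖w‖⁻¹ • w ∈ Metric.sphere (0 : Fin n → ℝ) 1 := by
    simp [norm_smul, abs_of_nonneg (norm_nonneg w), inv_mul_cancel₀ hnw]
  calc cdR Q pi w = cdR Q pi (‖w‖⁻¹ • w) := (cdR_smul Q pi (inv_ne_zero hnw) w).symm
    _ ≤ cdR Q pi w0 := hmax hmem
end

section
/- (Linear convergence of randomized coordinate descent.) Let π lie in the interior of the probability simplex and let U_π < 1 be a constant with r(π, w) ≤ U_π for all nonzero w. Let (i_t)_{t≥1} be an i.i.d. sequence of coordinate indices with distribution π, and define the random iterates w^(0) ∈ ℝⁿ and w^(t) = T_{i_t} w^(t−1). Then for every t, the expectation satisfies E[f(w^(t))] ≤ U_π^t · f(w^(0)); in particular E[f(w^(t))] converges to zero at least at the linear rate U_π. -/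
open Matrix

/-- linear convergence of randomized CD: let `π` be interior and
`U_π < 1` a constant with `r(π, w) ≤ U_π` for all nonzero `w`. For i.i.d.
coordinate choices `i_1, …, i_t ∼ π` with iterates `w^(t) = T_{i_t} w^(t−1)`,
the expectation `E[f(w^(t))] = Σ_{s : Fin t → Fin n} (Π_k π(s k)) f(T_{s_t} ⋯ T_{s_1} w^(0))`
satisfies `E[f(w^(t))] ≤ U_π^t · f(w^(0))` for every `t`. -/
theorem cd_linear_convergence {n : ℕ} (hn : 1 ≤ n)
    (Q : Matrix (Fin n) (Fin n) ℝ) (hQ : Q.PosDef)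
    (pi : Fin n → ℝ) (hpi : ∀ i, 0 < pi i) (hsum : ∑ i, pi i = 1)
    (U : ℝ) (hU : U < 1) (hUr : ∀ w : Fin n → ℝ, w ≠ 0 → cdR Q pi w ≤ U)
    (w0 : Fin n → ℝ) (t : ℕ) :
    ∑ s : Fin t → Fin n, (∏ k, pi (s k)) *
        cdF Q ((List.ofFn s).foldl (fun v i => cdT Q i v) w0)
      ≤ U ^ t * cdF Q w0 := by
  -- nonnegativity of f
  have hf0 : ∀ w : Fin n → ℝ, 0 ≤ cdF Q w := by
    intro w
    rcases eq_or_ne w 0 with h | h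
    · simp [cdF, h]
    · have := hQ.dotProduct_mulVec_pos h
      simp only [star_trivial] at this
      unfold cdF
      positivity
  have hfpos : ∀ w : Fin n → ℝ, w ≠ 0 → 0 < cdF Q w := by
    intro w h
    have := hQ.dotProduct_mulVec_pos h
    simp only [star_trivial] at this
    unfold cdF
    positivity
  -- U ≥ 0
  have hU0 : 0 ≤ U := by
    have hz : (Pi.single (⟨0, hn⟩ : Fin n) (1:ℝ) : Fin n → ℝ) ≠ 0 := by
      intro h
      have := congrFun h ⟨0, hn⟩
      simp at this
    refine le_trans ?_ (hUr _ hz)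
    apply Finset.sum_nonneg
    intro i _
    have := hf0 (cdT Q i (Pi.single (⟨0, hn⟩ : Fin n) (1:ℝ)))
    have := (hfpos _ hz).le
    have := (hpi i).le
    positivity
  -- one-step bound
  have step : ∀ w : Fin n → ℝ, ∑ i, pi i * cdF Q (cdT Q i w) ≤ U * cdF Q w := by
    intro w
    rcases eq_or_ne w 0 with h | h
    · subst h
      have hT : ∀ i : Fin n, cdT Q i (0 : Fin n → ℝ) = 0 := by
        intro i
        have hd : ((fun j => Q j i) ⬝ᵥ (0 : Fin n → ℝ)) = 0 := dotProduct_zero _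
        simp [cdT, hd]
      simp [hT, cdF]
    · have hw := hfpos w h
      have := hUr w h
      unfold cdR at this
      have h2 : (∑ i, pi i * cdF Q (cdT Q i w)) / cdF Q w ≤ U := by
        rw [Finset.sum_div]
        exact this
      calc ∑ i, pi i * cdF Q (cdT Q i w)
          = ((∑ i, pi i * cdF Q (cdT Q i w)) / cdF Q w) * cdF Q w := by
            field_simp
        _ ≤ U * cdF Q w := by
            exact mul_le_mul_of_nonneg_right h2 hw.le
  -- induction on t, generalizing w0
  induction t generalizing w0 with
  | zero => simp
  | succ t ih =>
    have key : ∑ s : Fin (t+1) → Fin n, (∏ k, pi (s k)) *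
        cdF Q ((List.ofFn s).foldl (fun v i => cdT Q i v) w0)
        = ∑ i : Fin n, ∑ s : Fin t → Fin n,
            pi i * ((∏ k, pi (s k)) *
              cdF Q ((List.ofFn s).foldl (fun v j => cdT Q j v) (cdT Q i w0))) := by
      rw [← Finset.sum_product']
      apply Fintype.sum_equiv (Fin.consEquiv fun _ => Fin n).symm
      intro s
      simp only [Fin.consEquiv_symm_apply]
      rw [Fin.prod_univ_succ, List.ofFn_succ, List.foldl_cons,
        show Fin.tail s = fun i => s i.succ from rfl]
      ring
    rw [key]
    have hbound : ∀ i : Fin n, ∑ s : Fin t → Fin n,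
        pi i * ((∏ k, pi (s k)) *
          cdF Q ((List.ofFn s).foldl (fun v j => cdT Q j v) (cdT Q i w0)))
        ≤ pi i * (U ^ t * cdF Q (cdT Q i w0)) := by
      intro i
      rw [← Finset.mul_sum]
      exact mul_le_mul_of_nonneg_left (ih (cdT Q i w0)) (hpi i).le
    calc ∑ i : Fin n, ∑ s : Fin t → Fin n,
            pi i * ((∏ k, pi (s k)) *
              cdF Q ((List.ofFn s).foldl (fun v j => cdT Q j v) (cdT Q i w0)))
        ≤ ∑ i : Fin n, pi i * (U ^ t * cdF Q (cdT Q i w0)) :=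
          Finset.sum_le_sum fun i _ => hbound i
      _ = U ^ t * ∑ i, pi i * cdF Q (cdT Q i w0) := by
          rw [Finset.mul_sum]; congr 1; funext i; ring
      _ ≤ U ^ t * (U * cdF Q w0) :=
          mul_le_mul_of_nonneg_left (step w0) (pow_nonneg hU0 t)
      _ = U ^ (t+1) * cdF Q w0 := by ring
end
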